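/- Let n ≥ 2 be an integer, α ∈ [0,1), c̃ > 0, and λ := arccosh((1 + c̃⁻¹)/(1 − α)). Let B be the (n−1)×(n−1) tridiagonal matrix with diagonal entries 1 + c̃⁻¹ and off-diagonal entries −(1−α)/2. Then B is invertible and for all 1 ≤ i, j ≤ n−1, ((1−α)/2)·B⁻¹_{ij} = sinh(min(i,j)·λ)·sinh((n − max(i,j))λ) / (sinh(λ)·sinh(nλ)). -/

import Mathlib

open Real Matrix Finset

noncomputable section

/-- Real inverse hyperbolic cosine. -/
def realArcosh (x : ℝ) : ℝ := Real.log (x + Real.sqrt (x ^ 2 - 1))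

/-- The regularized reduced kernel matrix: tridiagonal with diagonal `1 + c̃⁻¹`
and off-diagonal `−(1−α)/2`. -/
def Bmat (n : ℕ) (α ctil : ℝ) : Matrix (Fin (n - 1)) (Fin (n - 1)) ℝ :=
  fun i j =>
    if i = j then 1 + ctil⁻¹
    else if (i : ℕ) + 1 = (j : ℕ) ∨ (j : ℕ) + 1 = (i : ℕ) then -((1 - α) / 2)
    else 0

lemma cosh_arcosh {x : ℝ} (hx : 1 ≤ x) : Real.cosh (realArcosh x) = x := by
  have h1 : (0:ℝ) ≤ x^2 - 1 := by nlinarith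
  have hs : Real.sqrt (x^2-1) ^ 2 = x^2 - 1 := Real.sq_sqrt h1
  have hs0 : 0 ≤ Real.sqrt (x^2-1) := Real.sqrt_nonneg _
  have ht : 0 < x + Real.sqrt (x^2-1) := by nlinarith
  rw [realArcosh, Real.cosh_eq, Real.exp_log ht, Real.exp_neg, Real.exp_log ht]
  rw [div_eq_iff (by norm_num : (2:ℝ) ≠ 0)]
  field_simp
  nlinarith

lemma arcosh_pos {x : ℝ} (hx : 1 < x) : 0 < realArcosh x := by
  have hs0 : 0 ≤ Real.sqrt (x^2-1) := Real.sqrt_nonneg _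
  exact Real.log_pos (by linarith)

def Ffun (n : ℕ) (lam : ℝ) (p q : ℕ) : ℝ :=
  Real.sinh ((min p q : ℕ) * lam) * Real.sinh (((n : ℝ) - (max p q : ℕ)) * lam)

lemma tri_identity (n t q : ℕ) (β lam : ℝ) :
    2*β*Real.cosh lam * Ffun n lam (t+1) q - β * Ffun n lam t q - β * Ffun n lam (t+2) q
      = if t+1 = q then β * Real.sinh lam * Real.sinh (n * lam) else 0 := by
  rcases lt_trichotomy (t+1) q with h|h|h
  · rw [if_neg h.ne]
    rw [Ffun, Ffun, Ffun, min_eq_left h.le, min_eq_left (by omega : t ≤ q),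
      min_eq_left (by omega : t+2 ≤ q), max_eq_right h.le, max_eq_right (by omega : t ≤ q),
      max_eq_right (by omega : t+2 ≤ q)]
    push_cast
    rw [show ((t:ℝ))*lam = ((t:ℝ)+1)*lam - lam by ring,
      show ((t:ℝ)+2)*lam = ((t:ℝ)+1)*lam + lam by ring, Real.sinh_add, Real.sinh_sub]
    ring
  · rw [if_pos h]
    subst h
    rw [Ffun, Ffun, Ffun, min_self, min_eq_left (by omega : t ≤ t+1),
      min_eq_right (by omega : t+1 ≤ t+2), max_self, max_eq_right (by omega : t ≤ t+1),
      max_eq_left (by omega : t+1 ≤ t+2)]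
    push_cast
    rw [show ((t:ℝ))*lam = ((t:ℝ)+1)*lam - lam by ring,
      show ((n:ℝ) - ((t:ℝ)+2))*lam = ((n:ℝ) - ((t:ℝ)+1))*lam - lam by ring,
      show (n:ℝ)*lam = ((t:ℝ)+1)*lam + ((n:ℝ) - ((t:ℝ)+1))*lam by ring,
      Real.sinh_add, Real.sinh_sub, Real.sinh_sub]
    ring
  · rw [if_neg (by omega)]
    rw [Ffun, Ffun, Ffun, min_eq_right (by omega : q ≤ t+1), min_eq_right (by omega : q ≤ t),
      min_eq_right (by omega : q ≤ t+2), max_eq_left (by omega : q ≤ t+1),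
      max_eq_left (by omega : q ≤ t), max_eq_left (by omega : q ≤ t+2)]
    push_cast
    rw [show ((n:ℝ) - (t:ℝ))*lam = ((n:ℝ) - ((t:ℝ)+1))*lam + lam by ring,
      show ((n:ℝ) - ((t:ℝ)+2))*lam = ((n:ℝ) - ((t:ℝ)+1))*lam - lam by ring,
      Real.sinh_add, Real.sinh_sub]
    ring

lemma sum_tri (m ti : ℕ) (hti : ti < m) (g : ℕ → ℝ) (d β : ℝ)
    (hg0 : g 0 = 0) (hgm : g (m+1) = 0) :
    ∑ k ∈ Finset.range m,
        (if ti = k then d else if ti + 1 = k ∨ k + 1 = ti then -β else 0) * g (k+1)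
      = d * g (ti+1) - β * g ti - β * g (ti+2) := by
  have hcongr : ∀ k ∈ Finset.range m,
      (if ti = k then d else if ti + 1 = k ∨ k + 1 = ti then -β else 0) * g (k+1)
        = (if ti = k then d * g (ti+1) else 0) + (if ti + 1 = k then -β * g (ti+2) else 0)
          + (if ti = k + 1 then -β * g ti else 0) := by
    intro k _
    split_ifs with h1 h2 h3 h2 h3 h3 h3 <;> first
      | (subst_vars; omega)
      | (subst_vars; ring)
      | (simp_all; try ring)
  rw [Finset.sum_congr rfl hcongr, Finset.sum_add_distrib, Finset.sum_add_distrib,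
    Finset.sum_ite_eq (Finset.range m) ti, Finset.sum_ite_eq (Finset.range m) (ti+1),
    if_pos (Finset.mem_range.2 hti)]
  have h2 : (if ti + 1 ∈ Finset.range m then -β * g (ti+2) else 0) = -β * g (ti+2) := by
    split_ifs with h
    · rfl
    · have : ti + 1 = m := by simp at h; omega
      rw [show ti + 2 = m + 1 by omega, hgm]; ring
  have h3 : (∑ k ∈ Finset.range m, if ti = k + 1 then -β * g ti else 0) = -β * g ti := by
    rcases ti with _ | s
    · simp [hg0]
    · have : ∀ k, (s + 1 = k + 1) = (k = s) := by intro k; simp [eq_comm]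
      simp only [this]
      rw [Finset.sum_ite_eq' (Finset.range m) s, if_pos (Finset.mem_range.2 (by omega))]
  rw [h2, h3]; ring

/-- Closed form of the inverse of the regularized reduced kernel matrix,
with 1-based indices `(i : ℕ) + 1`, `(j : ℕ) + 1`. -/
theorem reduced_kernel_inverse
    (n : ℕ) (hn : 2 ≤ n) (α ctil : ℝ) (hα0 : 0 ≤ α) (hα1 : α < 1) (hc : 0 < ctil) :
    IsUnit (Bmat n α ctil) ∧
      ∀ i j : Fin (n - 1),
        ((1 - α) / 2) * (Bmat n α ctil)⁻¹ i j =
          Real.sinh (min ((i : ℝ) + 1) ((j : ℝ) + 1) *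
              realArcosh ((1 + ctil⁻¹) / (1 - α))) *
            Real.sinh (((n : ℝ) - max ((i : ℝ) + 1) ((j : ℝ) + 1)) *
              realArcosh ((1 + ctil⁻¹) / (1 - α))) /
          (Real.sinh (realArcosh ((1 + ctil⁻¹) / (1 - α))) *
            Real.sinh ((n : ℝ) * realArcosh ((1 + ctil⁻¹) / (1 - α)))) := by
  have h1α : (0:ℝ) < 1 - α := by linarith
  have hci : (0:ℝ) < ctil⁻¹ := inv_pos.2 hc
  set β : ℝ := (1 - α) / 2 with hβdef
  have hβ : 0 < β := by positivity
  set x : ℝ := (1 + ctil⁻¹) / (1 - α) with hxdef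
  have hx : 1 < x := by
    rw [hxdef, lt_div_iff₀ h1α]; linarith
  set lam : ℝ := realArcosh x with hlamdef
  have hcosh : Real.cosh lam = x := _root_.cosh_arcosh hx.le
  have hlam : 0 < lam := _root_.arcosh_pos hx
  have hs : 0 < Real.sinh lam := Real.sinh_pos_iff.2 hlam
  have hn0 : (0:ℝ) < (n:ℝ) := by
    have : 0 < n := by omega
    exact_mod_cast this
  have hS : 0 < Real.sinh ((n:ℝ) * lam) := Real.sinh_pos_iff.2 (by positivity)
  have hd : 1 + ctil⁻¹ = 2 * β * Real.cosh lam := by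
    rw [hcosh, hxdef, hβdef]; field_simp
  set D : ℝ := β * (Real.sinh lam * Real.sinh ((n:ℝ) * lam)) with hDdef
  have hD : D ≠ 0 := by positivity
  set M : Matrix (Fin (n-1)) (Fin (n-1)) ℝ :=
    fun i j => Ffun n lam ((i:ℕ)+1) ((j:ℕ)+1) / D with hMdef
  have hmul : Bmat n α ctil * M = 1 := by
    ext i j
    rw [Matrix.mul_apply]
    have hrw : ∀ k : Fin (n-1), Bmat n α ctil i k * M k j =
        (fun kk : ℕ =>
          (if (i:ℕ) = kk then 1 + ctil⁻¹ else
            if (i:ℕ) + 1 = kk ∨ kk + 1 = (i:ℕ) then -β else 0) *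
          (Ffun n lam (kk+1) ((j:ℕ)+1) / D)) (k : ℕ) := by
      intro k
      simp only [Bmat, hMdef, Fin.ext_iff, hβdef]
    rw [Finset.sum_congr rfl (fun k _ => hrw k),
      Fin.sum_univ_eq_sum_range (fun kk : ℕ =>
          (if (i:ℕ) = kk then 1 + ctil⁻¹ else
            if (i:ℕ) + 1 = kk ∨ kk + 1 = (i:ℕ) then -β else 0) *
          (Ffun n lam (kk+1) ((j:ℕ)+1) / D)) (n-1)]
    have hg0 : Ffun n lam 0 ((j:ℕ)+1) / D = 0 := by
      simp [Ffun]
    have hgm : Ffun n lam ((n-1)+1) ((j:ℕ)+1) / D = 0 := by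
      have hjn : (j:ℕ) + 1 ≤ n - 1 + 1 := by omega
      have h1 : max ((n-1)+1) ((j:ℕ)+1) = (n-1)+1 := max_eq_left hjn
      have h2 : ((n-1)+1 : ℕ) = n := by omega
      rw [Ffun, h1, h2]
      simp
    rw [sum_tri (n-1) (i:ℕ) i.isLt (fun p => Ffun n lam p ((j:ℕ)+1) / D) _ _ hg0 hgm]
    rw [hd]
    have : 2 * β * Real.cosh lam * (Ffun n lam ((i:ℕ)+1) ((j:ℕ)+1) / D)
        - β * (Ffun n lam (i:ℕ) ((j:ℕ)+1) / D) - β * (Ffun n lam ((i:ℕ)+2) ((j:ℕ)+1) / D)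
      = (2 * β * Real.cosh lam * Ffun n lam ((i:ℕ)+1) ((j:ℕ)+1)
          - β * Ffun n lam (i:ℕ) ((j:ℕ)+1) - β * Ffun n lam ((i:ℕ)+2) ((j:ℕ)+1)) / D := by
      ring
    rw [this, tri_identity]
    rw [Matrix.one_apply]
    by_cases hij : i = j
    · rw [if_pos hij, if_pos (by rw [hij])]
      rw [hDdef]
      field_simp
    · rw [if_neg hij, if_neg (by simpa [Fin.ext_iff] using hij), zero_div]
  have hunit : IsUnit (Bmat n α ctil) := by
    rw [Matrix.isUnit_iff_isUnit_det]
    exact Matrix.isUnit_det_of_right_inverse hmul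
  refine ⟨hunit, fun i j => ?_⟩
  rw [Matrix.inv_eq_right_inv hmul]
  show β * (Ffun n lam ((i:ℕ)+1) ((j:ℕ)+1) / D) = _
  rw [Ffun, hDdef]
  have hmin : ((min ((i:ℕ)+1) ((j:ℕ)+1) : ℕ) : ℝ) = min ((i:ℝ)+1) ((j:ℝ)+1) := by
    push_cast [Nat.cast_min]; ring_nf
  have hmax : ((max ((i:ℕ)+1) ((j:ℕ)+1) : ℕ) : ℝ) = max ((i:ℝ)+1) ((j:ℝ)+1) := by
    push_cast [Nat.cast_max]; ring_nf
  rw [hmin, hmax]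
  field_simp
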